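/- Let A = P(E₁₁ + ⋯ + E_{n−1,n−1})P* for an invertible n×n matrix P over F_{q²} (so A is hermitian of rank n − 1), let x = P(y₁, …, yₙ)ᵀ with yₙ ≠ 0, and set z = (−y₁/yₙ, …, −y_{n−1}/yₙ)ᵀ ∈ F_{q²}^{n−1}. Then for every λ ∈ F_q with λ ≠ 0, the matrix A + λ x x* is invertible and (A + λ x x*)⁻¹ = (P⁻¹)* · [[I_{n−1}, z],[z*, z*z + (λ yₙ ȳₙ)⁻¹]] · P⁻¹, written in block form with upper-left (n−1)×(n−1) block I_{n−1}. Moreover, if q ≥ 3 and L = {A + λ x x* : λ ∈ F_q, λ ≠ 0} is a leaf of A, then L⁻¹ = {C⁻¹ : C ∈ L} is a leaf of the rank n−1 matrix (P⁻¹)* · [[I_{n−1}, z],[z*, z*z]] · P⁻¹, namely L⁻¹ = {(P⁻¹)*[[I_{n−1}, z],[z*, z*z]]P⁻¹ + μ w w* : μ ∈ F_q, μ ≠ 0} where w = (P⁻¹)* eₙ and eₙ = (0,…,0,1)ᵀ. -/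

import Mathlib

open Matrix

/-- Conjugate transpose with respect to the involution `x ↦ x ^ q` on `F = F_{q²}`. -/
def ctrans (q : ℕ) {F : Type*} [Field F] {m n : Type*} (A : Matrix m n F) : Matrix n m F :=
  Matrix.of fun i j => (A j i) ^ q

/-- `A` is hermitian with respect to the involution `x ↦ x ^ q`. -/
def IsHerm (q : ℕ) {F : Type*} [Field F] {n : Type*} (A : Matrix n n F) : Prop :=
  ctrans q A = A

/-- The rank-one hermitian matrix `x x*`. -/
def outerq (q : ℕ) {F : Type*} [Field F] {n : Type*} (x : n → F) : Matrix n n F :=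
  Matrix.of fun i j => x i * (x j) ^ q

/-- The set `{A + λ x x* : λ ∈ F_q, λ ≠ 0}` (the fixed field `F_q` is `{λ : λ ^ q = λ}`). -/
def leafSet (q : ℕ) {F : Type*} [Field F] {n : Type*} (A : Matrix n n F) (x : n → F) :
    Set (Matrix n n F) :=
  {B | ∃ lam : F, lam ^ q = lam ∧ lam ≠ 0 ∧ B = A + lam • outerq q x}

/-- `L` is a leaf of the hermitian matrix `A`: it is of the form
`{A + λ x x* : λ ∈ F_q, λ ≠ 0}` for a nonzero vector `x` and all of its members have
rank `rank A + 1`. -/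
def IsLeafOf (q : ℕ) {F : Type*} [Field F] {n : Type*} [Fintype n] (L : Set (Matrix n n F))
    (A : Matrix n n F) : Prop :=
  ∃ x : n → F, x ≠ 0 ∧ L = leafSet q A x ∧ ∀ B ∈ L, B.rank = A.rank + 1

/-- The block matrix `[[I_{n−1}, z], [z*, z*z + c]]` (indices `Fin m ⊕ Unit`, `m = n − 1`). -/
def blkMat (q m : ℕ) {F : Type*} [Field F] (z : Fin m → F) (c : F) :
    Matrix (Fin m ⊕ Unit) (Fin m ⊕ Unit) F :=
  Matrix.fromBlocks (1 : Matrix (Fin m) (Fin m) F)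
    (Matrix.of fun i (_ : Unit) => z i)
    (Matrix.of fun (_ : Unit) j => (z j) ^ q)
    (Matrix.of fun (_ : Unit) (_ : Unit) => (∑ i, (z i) ^ q * z i) + c)

section auxlemmas

variable {q : ℕ} {F : Type*} [Field F]

lemma ctrans_mul' (φ : F →+* F) (hφ : ∀ a, φ a = a ^ q) {l m n : Type*} [Fintype m]
    (A : Matrix l m F) (B : Matrix m n F) :
    ctrans q (A * B) = ctrans q B * ctrans q A := by
  ext i j
  simp only [ctrans, of_apply, mul_apply, ← hφ, map_sum, _root_.map_mul]
  exact Finset.sum_congr rfl fun k _ => mul_comm _ _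

lemma ctrans_one' (φ : F →+* F) (hφ : ∀ a, φ a = a ^ q) {n : Type*} [DecidableEq n] :
    ctrans q (1 : Matrix n n F) = 1 := by
  ext i j
  rcases eq_or_ne i j with h | h
  · subst h; simp [ctrans, one_apply_eq]
  · simp [ctrans, one_apply, h, Ne.symm h, ← hφ]

lemma outerq_mulVec' (φ : F →+* F) (hφ : ∀ a, φ a = a ^ q) {n : Type*} [Fintype n]
    (P : Matrix n n F) (y : n → F) :
    outerq q (P *ᵥ y) = P * outerq q y * ctrans q P := by
  ext i j
  simp only [outerq, of_apply, mul_apply, mulVec, dotProduct, ctrans, ← hφ, map_sum,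
    _root_.map_mul]
  rw [Finset.sum_mul_sum]
  rw [Finset.sum_comm]
  refine Finset.sum_congr rfl fun l _ => ?_
  rw [Finset.sum_mul]
  refine Finset.sum_congr rfl fun k _ => ?_
  ring

lemma key_block' (φ : F →+* F) (hφ : ∀ a, φ a = a ^ q) {m : ℕ}
    (y : Fin m ⊕ Unit → F) (hyn : y (Sum.inr ()) ≠ 0)
    (z : Fin m → F) (hz : ∀ i, z i = -(y (Sum.inl i)) / y (Sum.inr ()))
    (lam : F) (hlam : lam ≠ 0) :
    (Matrix.fromBlocks (1 : Matrix (Fin m) (Fin m) F) 0 0 0 + lam • outerq q y) *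
      blkMat q m z ((lam * (y (Sum.inr ()) * (y (Sum.inr ())) ^ q))⁻¹) = 1 := by
  have hnq : (y (Sum.inr ())) ^ q ≠ 0 := pow_ne_zero _ hyn
  have hzq : ∀ i, (z i) ^ q = -((y (Sum.inl i)) ^ q) / (y (Sum.inr ())) ^ q := by
    intro i
    rw [← hφ, hz i, map_div₀, map_neg, hφ, hφ]
  have h1 : ∀ (f : Fin m → F) (j : Fin m), ∑ x, f x * (1 : Matrix (Fin m) (Fin m) F) x j = f j := by
    intro f j
    rw [Finset.sum_eq_single j]
    · rw [one_apply_eq, mul_one]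
    · intro b _ hb; rw [one_apply_ne hb, mul_zero]
    · intro h; exact absurd (Finset.mem_univ j) h
  have h1' : ∀ (f : Fin m → F) (i : Fin m),
      ∑ x, (1 : Matrix (Fin m) (Fin m) F) i x * f x = f i := by
    intro f i
    rw [Finset.sum_eq_single i]
    · rw [one_apply_eq, one_mul]
    · intro b _ hb; rw [one_apply_ne (Ne.symm hb), zero_mul]
    · intro h; exact absurd (Finset.mem_univ i) h
  have hT : (∑ x, (y (Sum.inl x)) ^ q * z x)
      = -(∑ x, (y (Sum.inl x)) ^ q * y (Sum.inl x)) / y (Sum.inr ()) := by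
    rw [← Finset.sum_neg_distrib, Finset.sum_div]
    refine Finset.sum_congr rfl fun x _ => ?_
    rw [hz x]
    field_simp
  have hU : (∑ x, (z x) ^ q * z x)
      = (∑ x, (y (Sum.inl x)) ^ q * y (Sum.inl x)) / (y (Sum.inr ()) * (y (Sum.inr ())) ^ q) := by
    rw [Finset.sum_div]
    refine Finset.sum_congr rfl fun x _ => ?_
    rw [hzq x, hz x, div_mul_div_comm, neg_mul_neg, mul_comm (y (Sum.inr ()) ^ q)]
  ext i j
  rcases i with i | i <;> rcases j with j | j <;>
    simp only [mul_apply, Fintype.sum_sum_type, Finset.univ_unique, Finset.sum_singleton,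
      blkMat, fromBlocks_apply₁₁, fromBlocks_apply₁₂, fromBlocks_apply₂₁, fromBlocks_apply₂₂,
      Matrix.add_apply, Matrix.smul_apply, outerq, of_apply, smul_eq_mul, Matrix.zero_apply,
      zero_add, PUnit.default_eq_unit]
  case inl.inl =>
    rw [h1, hzq j]
    rcases eq_or_ne i j with rfl | hij
    · rw [one_apply_eq, one_apply_eq]
      field_simp
      ring
    · rw [one_apply_ne hij, one_apply_ne (by simp [hij])]
      field_simp
      ring
  case inl.inr =>
    rw [one_apply_ne (by simp)]
    simp only [add_mul, Finset.sum_add_distrib]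
    rw [h1']
    rw [show ∑ x, lam * (y (Sum.inl i) * y (Sum.inl x) ^ q) * z x
        = lam * y (Sum.inl i) * ∑ x, (y (Sum.inl x)) ^ q * z x from by
      rw [Finset.mul_sum]; exact Finset.sum_congr rfl fun x _ => by ring]
    rw [hT, hU, hz i]
    field_simp
    ring
  case inr.inl =>
    rw [h1, hzq j, one_apply_ne (by simp)]
    field_simp
    ring
  case inr.inr =>
    cases i; cases j
    rw [one_apply_eq]
    rw [show ∑ x, lam * (y (Sum.inr PUnit.unit) * y (Sum.inl x) ^ q) * z x
        = lam * y (Sum.inr PUnit.unit) * ∑ x, (y (Sum.inl x)) ^ q * z x from by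
      rw [Finset.mul_sum]; exact Finset.sum_congr rfl fun x _ => by ring]
    rw [hT, hU, mul_add,
      mul_inv_cancel₀ (mul_ne_zero hlam (mul_ne_zero hyn hnq))]
    field_simp
    ring

lemma exists_frob' (hq : IsPrimePow q) [Fintype F]
    (hF : Fintype.card F = q ^ 2) : ∃ φ : F →+* F, ∀ a, φ a = a ^ q := by
  obtain ⟨p, k, hp, hk, rfl⟩ := hq
  have hp' : p.Prime := Nat.prime_iff.mpr hp
  obtain ⟨n, hrp, hn⟩ := FiniteField.card F (ringChar F)
  have hpr : p = ringChar F := by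
    have hdvd : p ∣ ringChar F ^ (n : ℕ) := by
      rw [← hn, hF, ← pow_mul]
      exact dvd_pow_self p (by positivity)
    exact (Nat.prime_dvd_prime_iff_eq hp' hrp).mp (hp'.dvd_of_dvd_pow hdvd)
  haveI : Fact p.Prime := ⟨hp'⟩
  haveI : CharP F p := by rw [hpr]; infer_instance
  exact ⟨iterateFrobenius F p k, fun a => iterateFrobenius_def p k a⟩

lemma pow_q_pow_q' [Fintype F]
    (hF : Fintype.card F = q ^ 2) (a : F) : (a ^ q) ^ q = a := by
  rw [← pow_mul, ← sq, ← hF, FiniteField.pow_card]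

lemma blkMat_split' (q m : ℕ) (z : Fin m → F) (c : F) :
    blkMat q m z c = blkMat q m z 0 +
      c • Matrix.fromBlocks (0 : Matrix (Fin m) (Fin m) F) 0 0 1 := by
  ext i j
  rcases i with i | i <;> rcases j with j | j <;>
    simp [blkMat, Matrix.one_apply]

lemma blkMat_factor' (q m : ℕ) (z : Fin m → F) :
    blkMat q m z 0 =
      Matrix.fromBlocks (1 : Matrix (Fin m) (Fin m) F) 0
          (Matrix.of fun (_ : Unit) j => (z j) ^ q) 1 *
        Matrix.fromBlocks (1 : Matrix (Fin m) (Fin m) F) 0 0 0 *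
        Matrix.fromBlocks (1 : Matrix (Fin m) (Fin m) F)
          (Matrix.of fun i (_ : Unit) => z i) 0 1 := by
  have h1 : Matrix.fromBlocks (1 : Matrix (Fin m) (Fin m) F) 0
        (Matrix.of fun (_ : Unit) j => (z j) ^ q) 1 *
        Matrix.fromBlocks (1 : Matrix (Fin m) (Fin m) F) 0 0 (0 : Matrix Unit Unit F)
      = Matrix.fromBlocks (1 : Matrix (Fin m) (Fin m) F) 0
        (Matrix.of fun (_ : Unit) j => (z j) ^ q) (0 : Matrix Unit Unit F) := by
    rw [Matrix.fromBlocks_multiply]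
    simp
  rw [h1, Matrix.fromBlocks_multiply]
  ext i j
  rcases i with i | i <;> rcases j with j | j <;>
    simp [blkMat, Matrix.mul_apply]

lemma rank_D0' (m : ℕ) :
    (Matrix.fromBlocks (1 : Matrix (Fin m) (Fin m) F) 0 0 (0 : Matrix Unit Unit F)).rank
      = m := by
  classical
  have hd : Matrix.fromBlocks (1 : Matrix (Fin m) (Fin m) F) 0 0 0
      = Matrix.diagonal (Sum.elim (fun _ : Fin m => (1 : F)) (fun _ : Unit => 0)) := by
    rw [← Matrix.fromBlocks_diagonal, Matrix.diagonal_one, Matrix.diagonal_zero]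
  rw [hd, Matrix.rank_diagonal]
  have e : Fin m ≃
      {i : Fin m ⊕ Unit // Sum.elim (fun _ : Fin m => (1 : F)) (fun _ : Unit => 0) i ≠ 0} :=
    { toFun := fun i => ⟨Sum.inl i, one_ne_zero⟩
      invFun := fun i => match i with
        | ⟨Sum.inl j, _⟩ => j
        | ⟨Sum.inr j, h⟩ => absurd rfl h
      left_inv := fun i => rfl
      right_inv := fun i => match i with
        | ⟨Sum.inl j, _⟩ => rfl
        | ⟨Sum.inr j, h⟩ => absurd rfl h }
  rw [← Fintype.card_congr e, Fintype.card_fin]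

end auxlemmas

/-- **Lemma 3.1 (i).** With `A = P (I_{n−1} ⊕ 0) P*`, `x = P y`, `yₙ ≠ 0`, and
`z = (−y₁/yₙ, …, −y_{n−1}/yₙ)`:  for `0 ≠ λ ∈ F_q` the matrix `A + λ x x*` is invertible
with inverse `(P⁻¹)* [[I, z], [z*, z*z + (λ yₙ ȳₙ)⁻¹]] P⁻¹`; moreover if `q ≥ 3` and
`L = {A + λ x x* : 0 ≠ λ ∈ F_q}` is a leaf of `A`, then `L⁻¹` is a leaf of the rank `n−1`
matrix `(P⁻¹)* [[I, z], [z*, z*z]] P⁻¹`, generated by the vector `(P⁻¹)* eₙ`. -/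
theorem stmt6 (q m : ℕ) (hq : IsPrimePow q)
    (F : Type*) [Field F] [Fintype F] (hF : Fintype.card F = q ^ 2)
    (P : Matrix (Fin m ⊕ Unit) (Fin m ⊕ Unit) F) (hP : IsUnit P)
    (A : Matrix (Fin m ⊕ Unit) (Fin m ⊕ Unit) F)
    (hA : A = P * Matrix.fromBlocks (1 : Matrix (Fin m) (Fin m) F) 0 0 0 * ctrans q P)
    (y x : Fin m ⊕ Unit → F) (hx : x = P *ᵥ y) (hyn : y (Sum.inr ()) ≠ 0)
    (z : Fin m → F) (hz : ∀ i, z i = -(y (Sum.inl i)) / y (Sum.inr ())) :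
    (∀ lam : F, lam ^ q = lam → lam ≠ 0 →
      IsUnit (A + lam • outerq q x) ∧
      (A + lam • outerq q x)⁻¹ =
        ctrans q P⁻¹ *
          blkMat q m z ((lam * (y (Sum.inr ()) * (y (Sum.inr ())) ^ q))⁻¹) * P⁻¹) ∧
    (3 ≤ q → (∀ B ∈ leafSet q A x, B.rank = m + 1) →
      (ctrans q P⁻¹ * blkMat q m z 0 * P⁻¹).rank = m ∧
      (fun C => C⁻¹) '' leafSet q A x =
        leafSet q (ctrans q P⁻¹ * blkMat q m z 0 * P⁻¹)
          (ctrans q P⁻¹ *ᵥ Pi.single (Sum.inr ()) 1) ∧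
      IsLeafOf q ((fun C => C⁻¹) '' leafSet q A x)
        (ctrans q P⁻¹ * blkMat q m z 0 * P⁻¹)) := by
  classical
  obtain ⟨φ, hφ⟩ := exists_frob' hq hF
  have hdet : IsUnit P.det := (Matrix.isUnit_iff_isUnit_det P).mp hP
  have hctP : ctrans q P * ctrans q P⁻¹ = 1 := by
    rw [← ctrans_mul' φ hφ, Matrix.nonsing_inv_mul P hdet, ctrans_one' φ hφ]
  have hctP' : ctrans q P⁻¹ * ctrans q P = 1 := by
    rw [← ctrans_mul' φ hφ, Matrix.mul_nonsing_inv P hdet, ctrans_one' φ hφ]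
  -- the right-inverse identity
  have inv1 : ∀ lam : F, lam ≠ 0 →
      (A + lam • outerq q x) *
        (ctrans q P⁻¹ *
          blkMat q m z ((lam * (y (Sum.inr ()) * (y (Sum.inr ())) ^ q))⁻¹) * P⁻¹) = 1 := by
    intro lam hlam
    have hsum : A + lam • outerq q x =
        P * (Matrix.fromBlocks (1 : Matrix (Fin m) (Fin m) F) 0 0 0 + lam • outerq q y) *
          ctrans q P := by
      rw [hA, hx, outerq_mulVec' φ hφ]
      rw [Matrix.mul_add, Matrix.add_mul]
      congr 1
      rw [Matrix.mul_smul, Matrix.smul_mul]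
    rw [hsum]
    simp only [Matrix.mul_assoc]
    rw [← Matrix.mul_assoc (ctrans q P) (ctrans q P⁻¹), hctP, Matrix.one_mul]
    rw [← Matrix.mul_assoc
      (Matrix.fromBlocks (1 : Matrix (Fin m) (Fin m) F) 0 0 0 + lam • outerq q y)]
    rw [key_block' φ hφ y hyn z hz lam hlam, Matrix.one_mul, Matrix.mul_nonsing_inv P hdet]
  have main1 : ∀ lam : F, lam ≠ 0 →
      IsUnit (A + lam • outerq q x) ∧
      (A + lam • outerq q x)⁻¹ =
        ctrans q P⁻¹ *
          blkMat q m z ((lam * (y (Sum.inr ()) * (y (Sum.inr ())) ^ q))⁻¹) * P⁻¹ := by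
    intro lam hlam
    exact ⟨(Matrix.isUnit_iff_isUnit_det _).mpr
        (Matrix.isUnit_det_of_right_inverse (inv1 lam hlam)),
      Matrix.inv_eq_right_inv (inv1 lam hlam)⟩
  refine ⟨fun lam _ hlam => main1 lam hlam, fun _ _ => ?_⟩
  set nn : F := y (Sum.inr ()) * (y (Sum.inr ())) ^ q with hnn_def
  have hnn : nn ≠ 0 := mul_ne_zero hyn (pow_ne_zero _ hyn)
  have hnnq : nn ^ q = nn := by
    rw [hnn_def, mul_pow, pow_q_pow_q' hF, mul_comm]
  set w : Fin m ⊕ Unit → F := ctrans q P⁻¹ *ᵥ Pi.single (Sum.inr ()) 1 with hw_def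
  have hwi : ∀ i, w i = (P⁻¹ (Sum.inr ()) i) ^ q := by
    intro i
    rw [hw_def, Matrix.mulVec_single]
    show ctrans q P⁻¹ i (Sum.inr ()) * 1 = _
    rw [mul_one]
    rfl
  have houter : ctrans q P⁻¹ *
      Matrix.fromBlocks (0 : Matrix (Fin m) (Fin m) F) 0 0 1 * P⁻¹ = outerq q w := by
    ext i j
    simp only [Matrix.mul_apply, Fintype.sum_sum_type, Finset.univ_unique,
      Finset.sum_singleton, fromBlocks_apply₁₁, fromBlocks_apply₁₂, fromBlocks_apply₂₁,
      fromBlocks_apply₂₂, Matrix.zero_apply, mul_zero, zero_mul, Finset.sum_const_zero,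
      add_zero, zero_add, outerq, of_apply, hwi, pow_q_pow_q' hF, Matrix.one_apply_eq,
      mul_one, PUnit.default_eq_unit]
    rfl
  have hNc : ∀ c : F, ctrans q P⁻¹ * blkMat q m z c * P⁻¹
      = ctrans q P⁻¹ * blkMat q m z 0 * P⁻¹ + c • outerq q w := by
    intro c
    rw [blkMat_split' q m z c, Matrix.mul_add, Matrix.add_mul, Matrix.mul_smul,
      Matrix.smul_mul, houter]
  have hset : (fun C => C⁻¹) '' leafSet q A x
      = leafSet q (ctrans q P⁻¹ * blkMat q m z 0 * P⁻¹) w := by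
    ext B
    constructor
    · rintro ⟨C, ⟨lam, hl1, hl2, rfl⟩, rfl⟩
      refine ⟨(lam * nn)⁻¹, ?_, inv_ne_zero (mul_ne_zero hl2 hnn), ?_⟩
      · rw [inv_pow, mul_pow, hl1, hnnq]
      · show (A + lam • outerq q x)⁻¹ = _
        rw [(main1 lam hl2).2, hNc]
    · rintro ⟨mu, hm1, hm2, rfl⟩
      have hmu : (mu * nn)⁻¹ ≠ 0 := inv_ne_zero (mul_ne_zero hm2 hnn)
      refine ⟨A + (mu * nn)⁻¹ • outerq q x,
        ⟨(mu * nn)⁻¹, by rw [inv_pow, mul_pow, hm1, hnnq], hmu, rfl⟩, ?_⟩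
      show (A + (mu * nn)⁻¹ • outerq q x)⁻¹ = _
      rw [(main1 _ hmu).2, hNc]
      congr 2
      field_simp
  have hrank : (ctrans q P⁻¹ * blkMat q m z 0 * P⁻¹).rank = m := by
    have hdet1 : IsUnit (ctrans q P⁻¹ *
        Matrix.fromBlocks (1 : Matrix (Fin m) (Fin m) F) 0
          (Matrix.of fun (_ : Unit) j => (z j) ^ q) 1).det := by
      rw [Matrix.det_mul]
      exact (Matrix.isUnit_det_of_right_inverse hctP').mul
        (by rw [Matrix.det_fromBlocks_zero₁₂, Matrix.det_one, Matrix.det_one, mul_one]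
            exact isUnit_one)
    have hdet2 : IsUnit (Matrix.fromBlocks (1 : Matrix (Fin m) (Fin m) F)
          (Matrix.of fun i (_ : Unit) => z i) 0 1 * P⁻¹).det := by
      rw [Matrix.det_mul]
      refine IsUnit.mul ?_ (Matrix.isUnit_nonsing_inv_det P hdet)
      rw [Matrix.det_fromBlocks_zero₂₁, Matrix.det_one, Matrix.det_one, mul_one]
      exact isUnit_one
    rw [blkMat_factor' q m z]
    rw [show ctrans q P⁻¹ *
        (Matrix.fromBlocks (1 : Matrix (Fin m) (Fin m) F) 0
          (Matrix.of fun (_ : Unit) j => (z j) ^ q) 1 *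
          Matrix.fromBlocks (1 : Matrix (Fin m) (Fin m) F) 0 0 0 *
          Matrix.fromBlocks (1 : Matrix (Fin m) (Fin m) F)
            (Matrix.of fun i (_ : Unit) => z i) 0 1) * P⁻¹
      = (ctrans q P⁻¹ *
          Matrix.fromBlocks (1 : Matrix (Fin m) (Fin m) F) 0
            (Matrix.of fun (_ : Unit) j => (z j) ^ q) 1) *
        (Matrix.fromBlocks (1 : Matrix (Fin m) (Fin m) F) 0 0 0 *
          (Matrix.fromBlocks (1 : Matrix (Fin m) (Fin m) F)
            (Matrix.of fun i (_ : Unit) => z i) 0 1 * P⁻¹)) from by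
      simp only [Matrix.mul_assoc]]
    rw [Matrix.rank_mul_eq_right_of_isUnit_det _ _ hdet1,
      Matrix.rank_mul_eq_left_of_isUnit_det _ _ hdet2]
    exact rank_D0' m
  have hw0 : w ≠ 0 := by
    intro h
    have h2 : ctrans q P *ᵥ w = Pi.single (Sum.inr ()) 1 := by
      rw [hw_def, Matrix.mulVec_mulVec, hctP, Matrix.one_mulVec]
    rw [h, Matrix.mulVec_zero] at h2
    have := congrFun h2 (Sum.inr ())
    simp at this
  refine ⟨hrank, hset, w, hw0, hset, ?_⟩
  rintro B ⟨C, ⟨lam, hl1, hl2, rfl⟩, rfl⟩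
  have hu : IsUnit (A + lam • outerq q x)⁻¹ :=
    (Matrix.isUnit_iff_isUnit_det _).mpr (Matrix.isUnit_nonsing_inv_det _
      ((Matrix.isUnit_iff_isUnit_det _).mp (main1 lam hl2).1))
  rw [Matrix.rank_of_isUnit _ hu, hrank]
  simp
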